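/- Let G be a finite solvable group with Fit(G) = M × Z where Z ≤ Z(G) and M is normal in G, and assume every irreducible character of Fit(G) extends to its inertia subgroup in G. Then the character degree graphs satisfy Δ(G) = Δ(G/Z); more precisely, cd(G) = cd(G/Z). -/

import Mathlib

open scoped Classical


open CategoryTheory

/-- The set of degrees of irreducible complex characters of `G`. -/
def charDegrees (G : Type) [Group G] : Set ℕ :=
  {d | ∃ V : FDRep ℂ G, Simple V ∧ Module.finrank ℂ V = d}

/-- The character degree graph `Δ(G)`: vertices are primes dividing some irreducible
character degree, two primes being adjacent iff their product divides some degree. -/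
def degreeGraph (G : Type) [Group G] : SimpleGraph ℕ where
  Adj p q := p ≠ q ∧ p.Prime ∧ q.Prime ∧ ∃ d ∈ charDegrees G, p * q ∣ d
  symm := ⟨by
    rintro p q ⟨h1, h2, h3, d, hd, hdvd⟩
    exact ⟨h1.symm, h3, h2, d, hd, by rwa [mul_comm]⟩⟩
  loopless := ⟨by rintro p ⟨h, _⟩; exact h rfl⟩

/-- The vertex set `ρ(G)` of `Δ(G)`. -/
def vertexSet (G : Type) [Group G] : Set ℕ :=
  {p | p.Prime ∧ ∃ d ∈ charDegrees G, p ∣ d}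

/-- `Δ(G)` is connected with diameter exactly `3`. -/
def ConnectedDiamThree (G : Type) [Group G] : Prop :=
  (∀ u ∈ vertexSet G, ∀ v ∈ vertexSet G, (degreeGraph G).Reachable u v) ∧
  (∀ u ∈ vertexSet G, ∀ v ∈ vertexSet G, (degreeGraph G).dist u v ≤ 3) ∧
  (∃ u ∈ vertexSet G, ∃ v ∈ vertexSet G, (degreeGraph G).dist u v = 3)

/-- `Δ(G)` is disconnected. -/
def DisconnectedGraph (G : Type) [Group G] : Prop :=
  ∃ u ∈ vertexSet G, ∃ v ∈ vertexSet G, ¬ (degreeGraph G).Reachable u v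

/-- The Fitting subgroup: the join of all nilpotent normal subgroups. -/
def fittingSubgroup (G : Type) [Group G] : Subgroup G :=
  ⨆ (N : Subgroup G) (_ : N.Normal) (_ : Group.IsNilpotent N), N


open CategoryTheory

/-- The character of `W` viewed as a function on `G`, extended by zero off `F`. -/
noncomputable def classFun {G : Type} [Group G] (F : Subgroup G) (W : FDRep ℂ F) : G → ℂ :=
  fun g => if h : g ∈ F then W.character ⟨g, h⟩ else 0

/-- The inertia subgroup in `G` of a function `f : G → ℂ` under conjugation. -/
def inertia {G : Type} [Group G] (f : G → ℂ) : Subgroup G where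
  carrier := {g | ∀ x, f (g * x * g⁻¹) = f x}
  one_mem' := by intro x; simp
  mul_mem' := by
    intro a b ha hb x
    have h : a * b * x * (a * b)⁻¹ = a * (b * x * b⁻¹) * a⁻¹ := by group
    rw [h, ha, hb]
  inv_mem' := by
    intro a ha x
    have h1 := ha (a⁻¹ * x * a)
    have h2 : a * (a⁻¹ * x * a) * a⁻¹ = x := by group
    rw [h2] at h1
    rw [inv_inv]
    exact h1.symm

/-- Every irreducible character of `F` extends to its inertia subgroup in `G`. -/
def AllExtendToInertia (G : Type) [Group G] (F : Subgroup G) : Prop :=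
  ∀ W : FDRep ℂ F, Simple W →
    ∃ U : FDRep ℂ (inertia (classFun F W)),
      ∀ (x : G) (hx : x ∈ inertia (classFun F W)) (hxF : x ∈ F),
        U.character ⟨x, hx⟩ = W.character ⟨x, hxF⟩

open CategoryTheory Module

namespace Aux
variable {k : Type} [Field k] {G : Type} [Monoid G]

def stable (V : FDRep k G) (p : Submodule k V) : Prop := ∀ g : G, ∀ x ∈ p, V.ρ g x ∈ p

noncomputable def subrep (V : FDRep k G) (p : Submodule k V) (hp : stable V p) : FDRep k G :=
  FDRep.of
    { toFun := fun g => (V.ρ g).restrict (hp g)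
      map_one' := by ext x; simp [LinearMap.restrict_apply]
      map_mul' := by intro g h; ext x; simp [LinearMap.restrict_apply] }

noncomputable def subrepι (V : FDRep k G) (p : Submodule k V) (hp : stable V p) :
    subrep V p hp ⟶ V where
  hom := FGModuleCat.ofHom (p.subtype : p →ₗ[k] V)
  comm := by intro g; ext x; rfl

theorem hom_comm {V W : FDRep k G} (f : V ⟶ W) (g : G) (x : V) :
    f.hom (V.ρ g x) = W.ρ g (f.hom x) :=
  congrArg (fun φ : V.V ⟶ W.V => φ x) (f.comm g)

theorem hom_apply_eq {V W : FDRep k G} {f f' : V ⟶ W} (h : f = f') (x : V) :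
    f.hom x = f'.hom x := by rw [h]

theorem zero_hom_apply {V W : FDRep k G} (x : V) : (0 : V ⟶ W).hom x = 0 := rfl

theorem comp_hom_apply {U V W : FDRep k G} (f : U ⟶ V) (g : V ⟶ W) (x : U) :
    (f ≫ g).hom x = g.hom (f.hom x) := rfl

theorem id_hom_apply {V : FDRep k G} (x : V) : (𝟙 V : V ⟶ V).hom x = x := rfl

theorem isIso_of_bijective {V W : FDRep k G} (f : V ⟶ W) (hf : Function.Bijective f.hom) :
    IsIso f := by
  let e : (V : Type) ≃ₗ[k] (W : Type) := LinearEquiv.ofBijective (ConcreteCategory.hom f.hom : V →ₗ[k] W) hf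
  have he : ∀ x : V, e x = f.hom x := fun _ => rfl
  refine ⟨⟨⟨FGModuleCat.ofHom (e.symm : W →ₗ[k] V), ?_⟩, ?_, ?_⟩⟩
  · intro g
    ext x
    show e.symm (W.ρ g x) = V.ρ g (e.symm x)
    apply hf.injective
    show f.hom (e.symm (W.ρ g x)) = f.hom (V.ρ g (e.symm x))
    rw [hom_comm f g (e.symm x), ← he, ← he, e.apply_symm_apply, e.apply_symm_apply]
  · apply Action.hom_ext
    ext x
    show e.symm (f.hom x) = x
    rw [← he, e.symm_apply_apply]
  · apply Action.hom_ext
    ext x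
    show f.hom (e.symm x) = x
    rw [← he, e.apply_symm_apply]

theorem mono_of_injective {V W : FDRep k G} (f : V ⟶ W) (hf : Function.Injective f.hom) :
    Mono f := by
  constructor
  intro U g h hgh
  apply Action.hom_ext
  ext x
  exact hf (hom_apply_eq hgh x)

theorem simple_of (V : FDRep k G) (h0 : Module.finrank k V ≠ 0)
    (h : ∀ p : Submodule k V, stable V p → p = ⊥ ∨ p = ⊤) : Simple V := by
  constructor
  intro Y f hmono
  constructor
  · rintro hiso rfl
    apply h0
    have h1 : (𝟙 V : V ⟶ V) = 0 := by
      rw [← IsIso.inv_hom_id (0 : Y ⟶ V)]; simp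
    have h2 : ∀ a : V, a = 0 := fun a => by
      have := hom_apply_eq h1 a
      rwa [id_hom_apply, zero_hom_apply] at this
    have : Subsingleton V := ⟨fun a b => by rw [h2 a, h2 b]⟩
    exact Module.finrank_zero_of_subsingleton
  · intro hf
    have hker : stable Y (LinearMap.ker (ConcreteCategory.hom f.hom : Y →ₗ[k] V)) := by
      intro g x hx
      simp only [LinearMap.mem_ker] at hx ⊢
      exact (hom_comm f g x).trans ((congrArg (V.ρ g) hx).trans (map_zero _))
    have hιf : subrepι Y _ hker ≫ f = 0 := by
      apply Action.hom_ext
      ext x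
      exact LinearMap.mem_ker.mp x.2
    have hι0 : subrepι Y _ hker = 0 :=
      hmono.right_cancellation _ 0 (by rw [hιf, Limits.zero_comp])
    have hinj : Function.Injective f.hom := by
      rw [← LinearMap.ker_eq_bot, Submodule.eq_bot_iff]
      intro x hx
      exact hom_apply_eq hι0 ⟨x, hx⟩
    have hrange : stable V (LinearMap.range (ConcreteCategory.hom f.hom : Y →ₗ[k] V)) := by
      rintro g x ⟨y, rfl⟩
      exact ⟨Y.ρ g y, (hom_comm f g y)⟩
    rcases h _ hrange with hb | ht
    · exact absurd (Action.hom_ext _ _ (by ext x; exact LinearMap.congr_fun (LinearMap.range_eq_bot.mp hb) x)) hf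
    · exact isIso_of_bijective f ⟨hinj, by rw [← LinearMap.range_eq_top]; exact ht⟩

theorem simple_dest (V : FDRep k G) (hV : Simple V) :
    Module.finrank k V ≠ 0 ∧ ∀ p : Submodule k V, stable V p → p = ⊥ ∨ p = ⊤ := by
  constructor
  · intro h0
    rw [Module.finrank_zero_iff] at h0
    haveI : Subsingleton V.V.obj := h0
    apply CategoryTheory.id_nonzero V
    apply Action.hom_ext
    ext x
    exact Subsingleton.elim _ _
  · intro p hp
    by_cases hb : p = ⊥
    · exact Or.inl hb
    right
    have hι : subrepι V p hp ≠ 0 := by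
      intro h
      apply hb
      rw [Submodule.eq_bot_iff]
      intro x hx
      exact hom_apply_eq h ⟨x, hx⟩
    have hmono : Mono (subrepι V p hp) := mono_of_injective _ (fun a b h => Subtype.ext h)
    have hiso := (hV.mono_isIso_iff_nonzero (f := subrepι V p hp)).mpr hι
    rw [eq_top_iff]
    intro x _
    have : (subrepι V p hp).hom ((CategoryTheory.inv (subrepι V p hp)).hom x) = x := by
      rw [← comp_hom_apply, IsIso.inv_hom_id, id_hom_apply]
    rw [← this]
    exact ((CategoryTheory.inv (subrepι V p hp)).hom x).2

theorem simple_iff (V : FDRep k G) :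
    Simple V ↔ Module.finrank k V ≠ 0 ∧ ∀ p : Submodule k V, stable V p → p = ⊥ ∨ p = ⊤ :=
  ⟨simple_dest V, fun ⟨h0, h⟩ => simple_of V h0 h⟩

end Aux

namespace Aux
variable {k : Type} [Field k] {G H : Type} [Monoid G] [Monoid H]

/-- Pull back a representation along a monoid hom. -/
noncomputable def pull (φ : G →* H) (V : FDRep k H) : FDRep k G :=
  FDRep.of ((V.ρ).comp φ)

theorem pull_finrank (φ : G →* H) (V : FDRep k H) :
    Module.finrank k (pull φ V) = Module.finrank k V := rfl

theorem pull_simple_iff (φ : G →* H) (hφ : Function.Surjective φ) (V : FDRep k H) :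
    Simple (pull φ V) ↔ Simple V := by
  rw [simple_iff, simple_iff]
  constructor
  · rintro ⟨h0, h⟩
    refine ⟨h0, fun p hp => h p ?_⟩
    intro g x hx
    exact hp (φ g) x hx
  · rintro ⟨h0, h⟩
    refine ⟨h0, fun p hp => h p ?_⟩
    intro g x hx
    obtain ⟨g', rfl⟩ := hφ g
    exact hp g' x hx

/-- Twist a representation by a one-dimensional character (unit valued). -/
noncomputable def twist (V : FDRep k G) (μ : G →* kˣ) : FDRep k G :=
  FDRep.of
    { toFun := fun g => ((μ g : k) • V.ρ g : V →ₗ[k] V)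
      map_one' := by simp
      map_mul' := by
        intro g h
        ext x
        show ((μ (g * h) : k) • V.ρ (g * h)) x = (μ g : k) • (V.ρ g) (((μ h : k) • V.ρ h) x)
        simp only [map_mul, LinearMap.smul_apply, Module.End.mul_apply, Units.val_mul, map_smul]
        rw [mul_smul, smul_comm] }

theorem twist_ρ (V : FDRep k G) (μ : G →* kˣ) (g : G) :
    (twist V μ).ρ g = ((μ g : k) • V.ρ g : V →ₗ[k] V) := rfl

theorem twist_finrank (V : FDRep k G) (μ : G →* kˣ) :
    Module.finrank k (twist V μ) = Module.finrank k V := rfl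

theorem twist_simple_iff (V : FDRep k G) (μ : G →* kˣ) :
    Simple (twist V μ) ↔ Simple V := by
  rw [simple_iff, simple_iff]
  have key : ∀ p : Submodule k V, stable (twist V μ) p ↔ stable V p := by
    intro p
    constructor
    · intro hp g x hx
      have h1 := hp g x hx
      rw [twist_ρ] at h1
      have h2 : (V.ρ g) x = (μ g : k)⁻¹ • (((μ g : k) • V.ρ g : V →ₗ[k] V) x) := by
        rw [LinearMap.smul_apply, smul_smul, inv_mul_cancel₀ (Units.ne_zero (μ g)), one_smul]
      rw [h2]
      exact p.smul_mem _ h1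
    · intro hp g x hx
      rw [twist_ρ]
      exact p.smul_mem _ (hp g x hx)
  constructor
  · rintro ⟨h0, h⟩
    exact ⟨h0, fun p hp => h p ((key p).mpr hp)⟩
  · rintro ⟨h0, h⟩
    exact ⟨h0, fun p hp => h p ((key p).mp hp)⟩

theorem exists_smul_id_of_finrank_one {X : Type} [AddCommGroup X] [Module k X]
    (h : Module.finrank k X = 1) (f : X →ₗ[k] X) : ∃ c : k, f = c • LinearMap.id := by
  obtain ⟨v, hv0, hv⟩ := finrank_eq_one_iff'.mp h
  obtain ⟨c, hc⟩ := hv (f v)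
  refine ⟨c, LinearMap.ext fun w => ?_⟩
  obtain ⟨a, rfl⟩ := hv w
  simp only [map_smul, LinearMap.smul_apply, LinearMap.id_apply]
  rw [← hc]

theorem trace_smul_id {X : Type} [AddCommGroup X] [Module k X] [FiniteDimensional k X]
    (h : Module.finrank k X = 1) (c : k) :
    LinearMap.trace k X (c • (LinearMap.id : X →ₗ[k] X)) = c := by
  rw [map_smul, LinearMap.trace_id, h]
  simp

end Aux

namespace Aux
variable {k : Type} [Field k]

theorem smul_id_mul {X : Type} [AddCommGroup X] [Module k X] (a b : k) :
    (a • LinearMap.id) * (b • LinearMap.id) = (a * b) • (LinearMap.id : X →ₗ[k] X) := by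
  ext x
  simp [Module.End.mul_apply, smul_smul, mul_comm]

theorem smul_id_inj {X : Type} [AddCommGroup X] [Module k X] [FiniteDimensional k X]
    (h : Module.finrank k X ≠ 0) {c c' : k}
    (hcc : c • (LinearMap.id : X →ₗ[k] X) = c' • LinearMap.id) : c = c' := by
  have : Nontrivial X := Module.finrank_pos_iff.mp (Nat.pos_of_ne_zero h)
  obtain ⟨v, hv⟩ := exists_ne (0 : X)
  have h2 : c • v = c' • v := LinearMap.congr_fun hcc v
  by_contra hne
  apply hv
  have h3 : (c - c') • v = 0 := by rw [sub_smul, sub_eq_zero]; exact h2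
  rcases smul_eq_zero.mp h3 with h4 | h4
  · exact absurd (sub_eq_zero.mp h4) hne
  · exact h4

variable {G : Type} [Group G]

theorem center_scalar (V : FDRep ℂ G) (hV : Simple V)
    {z : G} (hz : z ∈ Subgroup.center G) : ∃ c : ℂ, V.ρ z = c • LinearMap.id := by
  haveI := hV
  let f : V ⟶ V :=
    { hom := FGModuleCat.ofHom (V.ρ z : V →ₗ[ℂ] V)
      comm := by
        intro g
        ext x
        show V.ρ z (V.ρ g x) = V.ρ g (V.ρ z x)
        rw [← Module.End.mul_apply, ← Module.End.mul_apply, ← map_mul, ← map_mul,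
          ← Subgroup.mem_center_iff.mp hz g] }
  obtain ⟨c, hc⟩ := CategoryTheory.endomorphism_simple_eq_smul_id ℂ f
  refine ⟨c, ?_⟩
  have h1 : ConcreteCategory.hom (c • 𝟙 V : V ⟶ V).hom = ConcreteCategory.hom f.hom :=
    congrArg (fun φ : V ⟶ V => ConcreteCategory.hom φ.hom) hc
  have h2 : ConcreteCategory.hom (c • 𝟙 V : V ⟶ V).hom = (c • LinearMap.id : V →ₗ[ℂ] V) := rfl
  rw [h2] at h1
  exact h1.symm

theorem descendKer (N : Subgroup G) [N.Normal] (V : FDRep k G)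
    (hN : ∀ n ∈ N, V.ρ n = LinearMap.id) :
    N ≤ (Representation.asGroupHom V.ρ).ker :=
  fun n hn => Units.ext (by
    rw [Representation.asGroupHom_apply]
    show V.ρ n = ((1 : ((V : Type) →ₗ[k] V)ˣ) : (V : Type) →ₗ[k] V)
    rw [hN n hn]; rfl)

/-- Descend a representation trivial on a normal subgroup to the quotient. -/
noncomputable def descend (N : Subgroup G) [N.Normal] (V : FDRep k G)
    (hN : ∀ n ∈ N, V.ρ n = LinearMap.id) : FDRep k (G ⧸ N) :=
  FDRep.of ((Units.coeHom ((V : Type) →ₗ[k] V)).comp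
    (QuotientGroup.lift N (Representation.asGroupHom V.ρ) (descendKer N V hN)))

theorem descend_ρ (N : Subgroup G) [N.Normal] (V : FDRep k G)
    (hN : ∀ n ∈ N, V.ρ n = LinearMap.id) (g : G) :
    (descend N V hN).ρ (QuotientGroup.mk g) = V.ρ g := by
  show (Units.coeHom ((V : Type) →ₗ[k] V))
      (QuotientGroup.lift N (Representation.asGroupHom V.ρ) (descendKer N V hN)
        (QuotientGroup.mk g)) = V.ρ g
  rw [QuotientGroup.lift_mk']
  exact Representation.asGroupHom_apply V.ρ g

theorem descend_finrank (N : Subgroup G) [N.Normal] (V : FDRep k G)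
    (hN : ∀ n ∈ N, V.ρ n = LinearMap.id) :
    Module.finrank k (descend N V hN) = Module.finrank k V := rfl

theorem descend_simple (N : Subgroup G) [N.Normal] (V : FDRep k G)
    (hN : ∀ n ∈ N, V.ρ n = LinearMap.id) (hV : Simple V) : Simple (descend N V hN) := by
  rw [Aux.simple_iff] at hV ⊢
  refine ⟨hV.1, fun p hp => hV.2 p ?_⟩
  intro g x hx
  have := hp (QuotientGroup.mk g) x hx
  rwa [descend_ρ] at this

end Aux

theorem Aux.exists_extension {G : Type} [Group G] (M Z : Subgroup G) [Z.Normal] (hM : M.Normal)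
    (hZc : Z ≤ Subgroup.center G) (hsup : M ⊔ Z = fittingSubgroup G) (hinf : M ⊓ Z = ⊥)
    (hext : AllExtendToInertia G (fittingSubgroup G))
    (lam : G → ℂ) (hlam1 : lam 1 = 1)
    (hlammul : ∀ z1 ∈ Z, ∀ z2 ∈ Z, lam (z1 * z2) = lam z1 * lam z2) :
    ∃ μ : G →* ℂˣ, ∀ z ∈ Z, (μ z : ℂ) = lam z := by
  classical
  set F := fittingSubgroup G with hF
  -- decomposition
  have hdec : ∀ x : G, x ∈ F → ∃ z, z ∈ Z ∧ ∃ m ∈ M, m * z = x := by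
    intro x hx
    rw [← hsup, ← SetLike.mem_coe, Subgroup.mul_normal M Z] at hx
    obtain ⟨m, hm, z, hz, hmz⟩ := hx
    exact ⟨z, hz, m, hm, hmz⟩
  let zf : G → G := fun x =>
    if h : ∃ z, z ∈ Z ∧ ∃ m ∈ M, m * z = x then Classical.choose h else 1
  have hzf : ∀ x ∈ F, zf x ∈ Z ∧ ∃ m ∈ M, m * zf x = x := by
    intro x hx
    have h := hdec x hx
    simp only [zf, dif_pos h]
    exact Classical.choose_spec h
  have huniq : ∀ x ∈ F, ∀ z ∈ Z, (∃ m ∈ M, m * z = x) → z = zf x := by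
    rintro x hx z hz ⟨m, hm, hmz⟩
    obtain ⟨hz', m', hm', hmz'⟩ := hzf x hx
    have e : m * z = m' * zf x := by rw [hmz, hmz']
    have h1 : m'⁻¹ * m = zf x * z⁻¹ := by
      calc m'⁻¹ * m = m'⁻¹ * (m * z) * z⁻¹ := by group
        _ = m'⁻¹ * (m' * zf x) * z⁻¹ := by rw [e]
        _ = zf x * z⁻¹ := by group
    have h2 : zf x * z⁻¹ ∈ M ⊓ Z :=
      ⟨h1 ▸ M.mul_mem (M.inv_mem hm') hm, Z.mul_mem hz' (Z.inv_mem hz)⟩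
    rw [hinf] at h2
    exact (mul_inv_eq_one.mp (Subgroup.mem_bot.mp h2)).symm
  -- the one-dimensional representation of F
  let ρW : (↥F) →* (ℂ →ₗ[ℂ] ℂ) :=
    { toFun := fun f => lam (zf f.1) • LinearMap.id
      map_one' := by
        have h1 : (1 : G) = zf ((1 : ↥F) : G) :=
          huniq 1 F.one_mem 1 Z.one_mem ⟨1, M.one_mem, mul_one 1⟩
        show lam (zf ((1 : ↥F) : G)) • LinearMap.id = 1
        rw [← h1, hlam1, one_smul]
        rfl
      map_mul' := by
        intro f1 f2
        obtain ⟨hz1, m1, hm1, hm1z⟩ := hzf f1.1 f1.2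
        obtain ⟨hz2, m2, hm2, hm2z⟩ := hzf f2.1 f2.2
        have hc : m2 * zf f1.1 = zf f1.1 * m2 := Subgroup.mem_center_iff.mp (hZc hz1) m2
        have hx12 : (m1 * m2) * (zf f1.1 * zf f2.1) = ((f1 * f2 : ↥F) : G) := by
          calc (m1 * m2) * (zf f1.1 * zf f2.1)
              = m1 * (m2 * zf f1.1) * zf f2.1 := by group
            _ = m1 * (zf f1.1 * m2) * zf f2.1 := by rw [hc]
            _ = (m1 * zf f1.1) * (m2 * zf f2.1) := by group
            _ = f1.1 * f2.1 := by rw [hm1z, hm2z]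
        have hzz : zf f1.1 * zf f2.1 = zf ((f1 * f2 : ↥F) : G) :=
          huniq _ (f1 * f2).2 _ (Z.mul_mem hz1 hz2) ⟨m1 * m2, M.mul_mem hm1 hm2, hx12⟩
        show lam (zf ((f1 * f2 : ↥F) : G)) • LinearMap.id
            = (lam (zf f1.1) • LinearMap.id) * (lam (zf f2.1) • LinearMap.id)
        rw [Aux.smul_id_mul, ← hzz, hlammul _ hz1 _ hz2] }
  let W : FDRep ℂ ↥F := FDRep.of ρW
  have hWfr : Module.finrank ℂ W = 1 := Module.finrank_self ℂ
  have hWs : Simple W := by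
    apply Aux.simple_of W (by rw [hWfr]; exact one_ne_zero)
    intro p _
    exact Ideal.eq_bot_or_top p
  have hWchar : ∀ f : ↥F, W.character f = lam (zf f.1) := by
    intro f
    show LinearMap.trace ℂ _ (ρW f) = _
    exact Aux.trace_smul_id (Module.finrank_self ℂ) _
  have hcf : ∀ x (hx : x ∈ F), classFun F W x = lam (zf x) := by
    intro x hx
    show (if h : x ∈ F then W.character ⟨x, h⟩ else 0) = _
    rw [dif_pos hx]
    exact hWchar ⟨x, hx⟩
  have hcf' : ∀ x, x ∉ F → classFun F W x = 0 := by
    intro x hx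
    show (if h : x ∈ F then W.character ⟨x, h⟩ else 0) = 0
    rw [dif_neg hx]
  haveI := hM
  haveI hFn : F.Normal := hsup ▸ Subgroup.sup_normal M Z
  have hIn : ∀ g : G, g ∈ inertia (classFun F W) := by
    intro g
    show ∀ x, classFun F W (g * x * g⁻¹) = classFun F W x
    intro x
    by_cases hx : x ∈ F
    · have hx' : g * x * g⁻¹ ∈ F := hFn.conj_mem x hx g
      rw [hcf _ hx', hcf _ hx]
      obtain ⟨hz, m, hm, hmz⟩ := hzf x hx
      have hc : g⁻¹ * zf x = zf x * g⁻¹ := Subgroup.mem_center_iff.mp (hZc hz) g⁻¹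
      have he : (g * m * g⁻¹) * zf x = g * x * g⁻¹ := by
        calc (g * m * g⁻¹) * zf x = g * m * (g⁻¹ * zf x) := by group
          _ = g * m * (zf x * g⁻¹) := by rw [hc]
          _ = g * (m * zf x) * g⁻¹ := by group
          _ = g * x * g⁻¹ := by rw [hmz]
      have := huniq _ hx' _ hz ⟨g * m * g⁻¹, hM.conj_mem m hm g, he⟩
      rw [← this]
    · have hx' : ¬ (g * x * g⁻¹ ∈ F) := by
        intro h
        apply hx
        have h2 := hFn.conj_mem _ h g⁻¹
        have e : g⁻¹ * (g * x * g⁻¹) * g⁻¹⁻¹ = x := by group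
        rwa [e] at h2
      rw [hcf' _ hx', hcf' _ hx]
  obtain ⟨U, hU⟩ := hext W hWs
  -- U is one-dimensional
  have e1 : (⟨1, hIn 1⟩ : ↥(inertia (classFun F W))) = 1 := Subtype.ext rfl
  have e1' : (⟨1, F.one_mem⟩ : ↥F) = 1 := Subtype.ext rfl
  have hchar1 := hU 1 (hIn 1) F.one_mem
  rw [e1, e1', FDRep.char_one, FDRep.char_one] at hchar1
  have hU1 : Module.finrank ℂ U = 1 := by
    have : (Module.finrank ℂ U : ℂ) = ((1 : ℕ) : ℂ) := by
      rw [hchar1, hWfr]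
    exact_mod_cast this
  have hUρ : ∀ y : ↥(inertia (classFun F W)),
      U.ρ y = (U.character y) • LinearMap.id := by
    intro y
    obtain ⟨c, hc⟩ := Aux.exists_smul_id_of_finrank_one hU1 (U.ρ y)
    have hcc : U.character y = c := by
      show LinearMap.trace ℂ _ (U.ρ y) = c
      rw [hc]
      exact Aux.trace_smul_id hU1 c
    rw [hcc, hc]
  let ν : G → ℂ := fun g => U.character ⟨g, hIn g⟩
  have hνmul : ∀ g h : G, ν (g * h) = ν g * ν h := by
    intro g h
    have e : (⟨g * h, hIn _⟩ : ↥(inertia (classFun F W))) = ⟨g, hIn g⟩ * ⟨h, hIn h⟩ :=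
      Subtype.ext rfl
    have h1 : U.ρ ⟨g * h, hIn _⟩ = U.ρ ⟨g, hIn g⟩ * U.ρ ⟨h, hIn h⟩ := by
      rw [e, map_mul]
    rw [hUρ, hUρ, hUρ, Aux.smul_id_mul] at h1
    exact Aux.smul_id_inj (by rw [hU1]; exact one_ne_zero) h1
  have hν1 : ν 1 = 1 := by
    show U.character ⟨1, hIn 1⟩ = 1
    rw [e1, FDRep.char_one, hU1, Nat.cast_one]
  have hνne : ∀ g : G, ν g ≠ 0 := by
    intro g hg
    have h1 := hνmul g g⁻¹
    rw [show g * g⁻¹ = 1 by group, hν1, hg, zero_mul] at h1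
    exact one_ne_zero h1
  refine ⟨{ toFun := fun g => Units.mk0 (ν g) (hνne g)
            map_one' := Units.ext (by simpa using hν1)
            map_mul' := fun a b => Units.ext (by simpa using hνmul a b) }, ?_⟩
  intro z hz
  have hzF : z ∈ F := by
    rw [← hsup]
    exact Subgroup.mem_sup_right hz
  show ν z = lam z
  have h1 := hU z (hIn z) hzF
  show U.character ⟨z, hIn z⟩ = lam z
  rw [h1, hWchar]
  have h2 : z = zf z := huniq z hzF z hz ⟨1, M.one_mem, one_mul z⟩
  rw [← h2]

/-- Lemma 2.3: if `Fit(G) = M × Z` with `Z ≤ Z(G)`, `M ⊴ G`, and every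
irreducible character of `Fit(G)` extends to its inertia subgroup, then
`cd(G) = cd(G/Z)` (hence `Δ(G) = Δ(G/Z)`). -/
theorem stmt_12 (G : Type) [Group G] [Finite G] [Group.IsSolvable G]
    (M Z : Subgroup G) [Z.Normal] (hM : M.Normal)
    (hZc : Z ≤ Subgroup.center G)
    (hsup : M ⊔ Z = fittingSubgroup G) (hinf : M ⊓ Z = ⊥)
    (hext : AllExtendToInertia G (fittingSubgroup G)) :
    charDegrees G = charDegrees (G ⧸ Z) := by
  classical
  ext d
  simp only [charDegrees, Set.mem_setOf_eq]
  constructor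
  · rintro ⟨V, hV, rfl⟩
    have hfr0 : Module.finrank ℂ V ≠ 0 := (Aux.simple_dest V hV).1
    let lam : G → ℂ := fun z =>
      if h : z ∈ Z then Classical.choose (Aux.center_scalar V hV (hZc h)) else 1
    have hlam : ∀ z (hz : z ∈ Z), V.ρ z = lam z • LinearMap.id := by
      intro z hz
      simp only [lam, dif_pos hz]
      exact Classical.choose_spec (Aux.center_scalar V hV (hZc hz))
    have hlam1 : lam 1 = 1 := by
      have h1 := hlam 1 Z.one_mem
      rw [map_one] at h1
      refine (Aux.smul_id_inj hfr0 (c := lam 1) (c' := 1) ?_).symm.symm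
      rw [one_smul]
      exact h1.symm
    have hlammul : ∀ z1 ∈ Z, ∀ z2 ∈ Z, lam (z1 * z2) = lam z1 * lam z2 := by
      intro z1 hz1 z2 hz2
      apply Aux.smul_id_inj hfr0
      rw [← hlam _ (Z.mul_mem hz1 hz2), ← Aux.smul_id_mul, ← hlam _ hz1, ← hlam _ hz2, map_mul]
    obtain ⟨μ, hμ⟩ := Aux.exists_extension M Z hM hZc hsup hinf hext lam hlam1 hlammul
    let invμ : G →* ℂˣ :=
      { toFun := fun g => (μ g)⁻¹
        map_one' := by simp
        map_mul' := by intro a b; simp [mul_comm] }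
    have htriv : ∀ z ∈ Z, (Aux.twist V invμ).ρ z = LinearMap.id := by
      intro z hz
      have hne : lam z ≠ 0 := hμ z hz ▸ Units.ne_zero (μ z)
      rw [Aux.twist_ρ, hlam z hz]
      have h1 : ((invμ z : ℂˣ) : ℂ) = (lam z)⁻¹ := by
        show (((μ z)⁻¹ : ℂˣ) : ℂ) = (lam z)⁻¹
        rw [← hμ z hz]
        exact Units.val_inv_eq_inv_val (μ z)
      rw [h1]
      ext x
      simp [LinearMap.smul_apply, smul_smul, inv_mul_cancel₀ hne]
      rfl
    refine ⟨Aux.descend Z (Aux.twist V invμ) htriv,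
      Aux.descend_simple _ _ _ ((Aux.twist_simple_iff V invμ).mpr hV), rfl⟩
  · rintro ⟨V, hV, rfl⟩
    exact ⟨Aux.pull (QuotientGroup.mk' Z) V,
      (Aux.pull_simple_iff _ (QuotientGroup.mk'_surjective Z) V).mpr hV, rfl⟩
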